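/- Let α = (0110 1100 1010 0000) ∈ ℤ₂¹⁶ and ξ = (α, α, α, αᶜ) ∈ ℤ₂⁶⁴ with αᶜ = 1¹⁶ + α. Then ξ·RM(1,6) is a doubly even subcode of RM(4,6); that is, every element of ξ·RM(1,6) lies in RM(1,6)^⊥ and has weight divisible by 4. -/

import Mathlib

def wt {n : ℕ} (v : Fin n → ZMod 2) : ℕ :=
  (Finset.univ.filter fun i => v i ≠ 0).card

def g1 : Fin 16 → ZMod 2 := fun _ => 1
def g2 : Fin 16 → ZMod 2 := fun i => if i.val < 8 then 1 else 0
def g3 : Fin 16 → ZMod 2 := fun i => if i.val % 8 < 4 then 1 else 0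
def g4 : Fin 16 → ZMod 2 := fun i => if i.val % 4 < 2 then 1 else 0
def g5 : Fin 16 → ZMod 2 := fun i => if i.val % 2 = 0 then 1 else 0

/-- The first-order Reed-Muller code RM(1,4) of length 16. -/
def RM14 : Submodule (ZMod 2) (Fin 16 → ZMod 2) :=
  Submodule.span (ZMod 2) {g1, g2, g3, g4, g5}

/-- Four copies of a length-16 word, concatenated. -/
def quad (a : Fin 16 → ZMod 2) : Fin 64 → ZMod 2 :=
  fun i => a ⟨i.val % 16, Nat.mod_lt _ (by norm_num)⟩

def γ6 : Fin 64 → ZMod 2 := fun i => if i.val / 16 = 1 ∨ i.val / 16 = 3 then 1 else 0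
def γ7 : Fin 64 → ZMod 2 := fun i => if 32 ≤ i.val then 1 else 0

/-- The first-order Reed-Muller code RM(1,6) of length 64. -/
def RM16 : Submodule (ZMod 2) (Fin 64 → ZMod 2) :=
  Submodule.span (ZMod 2) ({v | ∃ a ∈ RM14, v = quad a} ∪ {γ6, γ7})

/-- The dual of a binary code with respect to the standard bilinear form. -/
def dual {n : ℕ} (C : Submodule (ZMod 2) (Fin n → ZMod 2)) :
    Set (Fin n → ZMod 2) :=
  {v | ∀ w ∈ C, ∑ i, v i * w i = 0}

/-- Concatenation of four length-16 words into a length-64 word. -/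
def concat4 (a b c d : Fin 16 → ZMod 2) : Fin 64 → ZMod 2 := fun i =>
  if h : i.val < 16 then a ⟨i.val, h⟩
  else if h' : i.val < 32 then b ⟨i.val - 16, by omega⟩
  else if h'' : i.val < 48 then c ⟨i.val - 32, by omega⟩
  else d ⟨i.val - 48, by omega⟩

def α0 : Fin 16 → ZMod 2 := ![0,1,1,0, 1,1,0,0, 1,0,1,0, 0,0,0,0]

def ξ0 : Fin 64 → ZMod 2 := concat4 α0 α0 α0 ((fun _ => 1) + α0)

/-! ### Auxiliary machinery -/
set_option maxRecDepth 10000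

/-- The seven generators of RM(1,6). -/
def G : Fin 7 → Fin 64 → ZMod 2 := ![quad g1, quad g2, quad g3, quad g4, quad g5, γ6, γ7]

lemma quad_mem {a : Fin 16 → ZMod 2} (ha : a ∈ RM14) : quad a ∈ RM16 :=
  Submodule.subset_span (Or.inl ⟨a, ha, rfl⟩)

lemma G_mem : ∀ j : Fin 7, G j ∈ RM16 := by
  have h1 : g1 ∈ RM14 := Submodule.subset_span (by simp)
  have h2 : g2 ∈ RM14 := Submodule.subset_span (by simp)
  have h3 : g3 ∈ RM14 := Submodule.subset_span (by simp)
  have h4 : g4 ∈ RM14 := Submodule.subset_span (by simp)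
  have h5 : g5 ∈ RM14 := Submodule.subset_span (by simp)
  intro j
  fin_cases j
  · exact quad_mem h1
  · exact quad_mem h2
  · exact quad_mem h3
  · exact quad_mem h4
  · exact quad_mem h5
  · exact Submodule.subset_span (Or.inr (Or.inl rfl))
  · exact Submodule.subset_span (Or.inr (Or.inr rfl))

lemma RM16_eq : RM16 = Submodule.span (ZMod 2) (Set.range G) := by
  apply le_antisymm
  · rw [RM16, Submodule.span_le]
    rintro v (⟨a, ha, rfl⟩ | hv)
    · -- quad a ∈ span (range G) for a ∈ RM14
      have key : ∀ x, x ∈ RM14 → quad x ∈ Submodule.span (ZMod 2) (Set.range G) := by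
        intro x hx
        refine Submodule.span_induction
          (p := fun x _ => quad x ∈ Submodule.span (ZMod 2) (Set.range G)) ?_ ?_ ?_ ?_ hx
        · intro y hy
          simp only [Set.mem_insert_iff, Set.mem_singleton_iff] at hy
          rcases hy with rfl | rfl | rfl | rfl | rfl
          · exact Submodule.subset_span ⟨0, rfl⟩
          · exact Submodule.subset_span ⟨1, rfl⟩
          · exact Submodule.subset_span ⟨2, rfl⟩
          · exact Submodule.subset_span ⟨3, rfl⟩
          · exact Submodule.subset_span ⟨4, rfl⟩
        · exact Submodule.zero_mem _
        · intro y z _ _ hy hz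
          exact Submodule.add_mem _ hy hz
        · intro c y _ hy
          exact Submodule.smul_mem _ c hy
      exact key a ha
    · rcases hv with rfl | hv
      · exact Submodule.subset_span ⟨5, rfl⟩
      · rw [Set.mem_singleton_iff] at hv
        subst hv
        exact Submodule.subset_span ⟨6, rfl⟩
  · rw [Submodule.span_le]
    rintro _ ⟨j, rfl⟩
    exact G_mem j

/-- Orthogonality to the generators implies orthogonality to the whole span. -/
lemma orth_span {v : Fin 64 → ZMod 2} (h : ∀ k : Fin 7, ∑ i, v i * G k i = 0) :
    ∀ w ∈ RM16, ∑ i, v i * w i = 0 := by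
  intro w hw
  rw [RM16_eq] at hw
  induction hw using Submodule.span_induction with
  | mem w hw =>
    obtain ⟨k, rfl⟩ := hw
    exact h k
  | zero => simp
  | add x y _ _ hx hy =>
    simp only [Pi.add_apply, mul_add, Finset.sum_add_distrib, hx, hy, add_zero]
  | smul c x _ hx =>
    have hterm : ∀ i, v i * (c • x) i = c * (v i * x i) := fun i => by
      rw [Pi.smul_apply, smul_eq_mul]; ring
    rw [Finset.sum_congr rfl fun i _ => hterm i, ← Finset.mul_sum, hx, mul_zero]

lemma wt_add_four {n : ℕ} (u v : Fin n → ZMod 2) (h : ∑ i, u i * v i = 0)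
    (hu : wt u % 4 = 0) (hv : wt v % 4 = 0) : wt (u + v) % 4 = 0 := by
  classical
  set A := Finset.univ.filter (fun i => u i ≠ 0) with hA
  set B := Finset.univ.filter (fun i => v i ≠ 0) with hB
  have hone : ∀ a : ZMod 2, a ≠ 0 → a = 1 := by decide
  have hsum : ∑ i, u i * v i = ((A ∩ B).card : ZMod 2) := by
    rw [← Finset.sum_subset (Finset.subset_univ (A ∩ B))
      (fun i _ hi => by
        simp only [hA, hB, Finset.mem_inter, Finset.mem_filter, Finset.mem_univ,
          true_and, not_and_or] at hi
        rcases hi with hi | hi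
        · rw [not_not.mp hi, zero_mul]
        · rw [not_not.mp hi, mul_zero])]
    rw [Finset.sum_congr rfl (fun i hi => by
      simp only [hA, hB, Finset.mem_inter, Finset.mem_filter] at hi
      rw [hone _ hi.1.2, hone _ hi.2.2, mul_one])]
    simp
  have hdvd : 2 ∣ (A ∩ B).card := by
    rw [hsum] at h
    exact (ZMod.natCast_eq_zero_iff _ 2).mp h
  have hC : Finset.univ.filter (fun i => (u + v) i ≠ 0) = (A ∪ B) \ (A ∩ B) := by
    ext i
    simp only [hA, hB, Finset.mem_sdiff, Finset.mem_union, Finset.mem_inter,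
      Finset.mem_filter, Finset.mem_univ, true_and, Pi.add_apply]
    have : ∀ a b : ZMod 2, (a + b ≠ 0 ↔ (a ≠ 0 ∨ b ≠ 0) ∧ ¬(a ≠ 0 ∧ b ≠ 0)) := by decide
    exact this (u i) (v i)
  have hcard : (A ∪ B).card + (A ∩ B).card = A.card + B.card :=
    Finset.card_union_add_card_inter A B
  have hle : (A ∩ B).card ≤ (A ∪ B).card :=
    Finset.card_le_card Finset.inter_subset_union
  have hwt : wt (u + v) = (A ∪ B).card - (A ∩ B).card := by
    rw [wt, hC, Finset.card_sdiff_of_subset Finset.inter_subset_union]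
  obtain ⟨k, hk⟩ := hdvd
  have hu' : wt u = A.card := rfl
  have hv' : wt v = B.card := rfl
  rw [hu'] at hu; rw [hv'] at hv
  omega

set_option maxRecDepth 40000 in
lemma base : ∀ j : Fin 7,
    (∀ k : Fin 7, ∑ i, (ξ0 * G j) i * G k i = 0) ∧ wt (ξ0 * G j) % 4 = 0 := by
  decide

theorem stmt_14 : ∀ β ∈ RM16, ξ0 * β ∈ dual RM16 ∧ wt (ξ0 * β) % 4 = 0 := by
  intro β hβ
  have key : (∀ k : Fin 7, ∑ i, (ξ0 * β) i * G k i = 0) ∧ wt (ξ0 * β) % 4 = 0 := by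
    rw [RM16_eq] at hβ
    induction hβ using Submodule.span_induction with
    | mem x hx =>
      obtain ⟨j, rfl⟩ := hx
      exact base j
    | zero =>
      constructor
      · intro k; simp
      · simp [wt]
    | add x y hx hy ihx ihy =>
      have hmul : ξ0 * (x + y) = ξ0 * x + ξ0 * y := mul_add _ _ _
      have hdot : ∑ i, (ξ0 * x) i * (ξ0 * y) i = 0 := by
        have heq : ∀ i, (ξ0 * x) i * (ξ0 * y) i = (ξ0 * x) i * y i := by
          intro i
          have hsq : ∀ a : ZMod 2, a * a = a := by decide
          simp only [Pi.mul_apply]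
          calc ξ0 i * x i * (ξ0 i * y i) = ξ0 i * ξ0 i * x i * y i := by ring
            _ = ξ0 i * x i * y i := by rw [hsq]
        rw [Finset.sum_congr rfl fun i _ => heq i]
        have hy16 : y ∈ RM16 := by rw [RM16_eq]; exact hy
        exact orth_span ihx.1 y hy16
      constructor
      · intro k
        rw [hmul]
        simp only [Pi.add_apply, add_mul, Finset.sum_add_distrib, ihx.1 k, ihy.1 k, add_zero]
      · rw [hmul]
        exact wt_add_four _ _ hdot ihx.2 ihy.2
    | smul c x hx ihx =>
      rcases (by decide : ∀ a : ZMod 2, a = 0 ∨ a = 1) c with rfl | rfl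
      · constructor
        · intro k; simp
        · simp [wt]
      · simpa using ihx
  exact ⟨orth_span key.1, key.2⟩
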